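/- Fix θ > 0. For each δ > 0 let σ(δ) > 0 and define the water-filled average input energy S(δ) = Σ_{k=0}^∞ max(0, σ(δ)² − θ² e^{(2k+1)δ}) and the capacity (in nats per transmission) C(δ) = Σ_{k=0}^∞ max(0, (1/2)·ln(σ(δ)²/(θ² e^{(2k+1)δ}))). Assume that δ·S(δ) stays bounded as δ → 0+. Then C(δ)/coth δ − (1/2)·[w₀(S(δ)/((coth δ/2)·θ²))]² → 0 as δ → 0+. -/

import Mathlib

open Real Filter Set

set_option maxHeartbeats 2000000

section HeatChannelAux

private lemma heat_mono_aux {f f' : ℝ → ℝ} (hf : ∀ x, HasDerivAt f (f' x) x)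
    (h0 : ∀ x, 0 ≤ x → 0 ≤ f' x) {a b : ℝ} (ha : 0 ≤ a) (hab : a ≤ b) :
    f a ≤ f b := by
  have hdiff : Differentiable ℝ f := fun x => (hf x).differentiableAt
  have hmono : MonotoneOn f (Set.Ici 0) := by
    refine monotoneOn_of_deriv_nonneg (convex_Ici 0) hdiff.continuous.continuousOn
      hdiff.differentiableOn ?_
    intro x hx
    rw [interior_Ici] at hx
    rw [(hf x).deriv]
    exact h0 x (le_of_lt hx)
  exact hmono ha (le_trans ha hab) hab

private lemma heat_sinh_le_mul_cosh {x : ℝ} (hx : 0 ≤ x) : Real.sinh x ≤ x * Real.cosh x := by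
  have h := heat_mono_aux (f := fun x => x * Real.cosh x - Real.sinh x)
    (f' := fun x => 1 * Real.cosh x + x * Real.sinh x - Real.cosh x)
    (fun x => ((hasDerivAt_id' x).mul (Real.hasDerivAt_cosh x)).sub (Real.hasDerivAt_sinh x))
    (fun x hx => by
      show (0:ℝ) ≤ 1 * Real.cosh x + x * Real.sinh x - Real.cosh x
      nlinarith [Real.sinh_nonneg_iff.mpr hx]) le_rfl hx
  simp only [Real.sinh_zero, Real.cosh_zero] at h
  nlinarith [h]

private lemma heat_g_lip {c a : ℝ} (hc : 0 ≤ c) (hca : c ≤ a) :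
    2 * a ^ 2 - 2 * c ^ 2 ≤
      ((2 * a - 1) * Real.exp (2 * a) + 1) - ((2 * c - 1) * Real.exp (2 * c) + 1) := by
  have hd : ∀ x : ℝ, HasDerivAt (fun x : ℝ => (2 * x - 1) * Real.exp (2 * x) - 2 * x ^ 2)
      (2 * 1 * Real.exp (2 * x) + (2 * x - 1) * (Real.exp (2 * x) * (2 * 1))
        - 2 * ((2 : ℕ) * x ^ (2 - 1))) x := by
    intro x
    exact ((((hasDerivAt_id' x).const_mul 2).sub_const 1).mul
      (((hasDerivAt_id' x).const_mul 2).exp)).sub ((hasDerivAt_pow 2 x).const_mul 2)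
  have h := heat_mono_aux hd
    (fun x hx => by
      show (0:ℝ) ≤ 2 * 1 * Real.exp (2 * x) + (2 * x - 1) * (Real.exp (2 * x) * (2 * 1))
        - 2 * ((2 : ℕ) * x ^ (2 - 1))
      have h1 := Real.add_one_le_exp (2 * x)
      have h2 := Real.exp_pos (2 * x)
      norm_num
      nlinarith)
    hc hca
  nlinarith [h]

private lemma heat_w0_sq_lip (w₀ : ℝ → ℝ)
    (hr : ∀ y : ℝ, 0 ≤ y → 0 ≤ w₀ y ∧ (2 * w₀ y - 1) * Real.exp (2 * w₀ y) + 1 = y)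
    {y₁ y₂ : ℝ} (h1 : 0 ≤ y₁) (h2 : 0 ≤ y₂) :
    |w₀ y₁ ^ 2 - w₀ y₂ ^ 2| ≤ |y₁ - y₂| / 2 := by
  obtain ⟨ha0, ha⟩ := hr y₁ h1
  obtain ⟨hc0, hc⟩ := hr y₂ h2
  rcases le_total (w₀ y₂) (w₀ y₁) with hle | hle
  · have key := heat_g_lip hc0 hle
    rw [ha, hc] at key
    have hsq : w₀ y₂ ^ 2 ≤ w₀ y₁ ^ 2 := by nlinarith
    rw [abs_of_nonneg (by linarith), abs_of_nonneg (by linarith)]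
    linarith
  · have key := heat_g_lip ha0 hle
    rw [ha, hc] at key
    have hsq : w₀ y₁ ^ 2 ≤ w₀ y₂ ^ 2 := by nlinarith
    rw [abs_of_nonpos (by linarith), abs_of_nonpos (by linarith)]
    linarith

private lemma heat_exp_sub_one_le {x : ℝ} (hx : 0 ≤ x) : Real.exp x - 1 ≤ x * Real.exp x := by
  have h := Real.add_one_le_exp (-x)
  rw [Real.exp_neg] at h
  have h2 := Real.exp_pos x
  have h3 : (-x + 1) * Real.exp x ≤ (Real.exp x)⁻¹ * Real.exp x :=
    mul_le_mul_of_nonneg_right h h2.le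
  rw [inv_mul_cancel₀ h2.ne'] at h3
  nlinarith

private lemma heat_exp_sub_one_sub_le {x : ℝ} (hx : 0 ≤ x) :
    Real.exp x - 1 - x ≤ x ^ 2 * Real.exp x := by
  have h1 := heat_exp_sub_one_le hx
  have h2 : x * (Real.exp x - 1) ≤ x * (x * Real.exp x) :=
    mul_le_mul_of_nonneg_left h1 hx
  nlinarith

private lemma heat_quad_le_exp {x : ℝ} (hx : 0 ≤ x) :
    1 + 2 * x + 2 * x ^ 2 ≤ Real.exp (2 * x) := by
  have h := Real.sum_le_exp_of_nonneg (by positivity : (0:ℝ) ≤ 2 * x) 3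
  simp [Finset.sum_range_succ] at h
  nlinarith [h]

private lemma heat_mul_cosh_le_sinh {x : ℝ} (hx : 0 ≤ x) (hx1 : x ≤ 1) :
    (x - x ^ 3) * Real.cosh x ≤ Real.sinh x := by
  rw [Real.sinh_eq, Real.cosh_eq, Real.exp_neg]
  set E := Real.exp x with hE
  have hE0 : 0 < E := Real.exp_pos x
  have hq : 1 + 2 * x + 2 * x ^ 2 ≤ E ^ 2 := by
    have := heat_quad_le_exp hx
    have h2 : Real.exp (2 * x) = E ^ 2 := by
      rw [two_mul, Real.exp_add]; ring
    linarith [h2 ▸ this]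
  have hpoly : 0 ≤ 1 - x + x ^ 3 := by nlinarith
  have hkey : (x - x ^ 3) * (E ^ 2 + 1) ≤ E ^ 2 - 1 := by
    nlinarith [mul_le_mul_of_nonneg_right hq hpoly, pow_nonneg hx 4, pow_nonneg hx 5]
  have hinv : E * E⁻¹ = 1 := mul_inv_cancel₀ hE0.ne'
  have hEA : 0 ≤ E * ((E - E⁻¹) / 2 - (x - x ^ 3) * ((E + E⁻¹) / 2)) := by nlinarith
  nlinarith [mul_pos hE0 hE0]

private lemma heat_bnd_B1 {c τ t T δ b : ℝ} (hδ : 0 < δ) (hδ1 : δ < 1) (ht : 0 < t) (htT : t ≤ T)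
    (hT2 : 2 ≤ T) (hτ0 : 0 < τ) (hτu : τ ≤ δ) (hτl : δ - δ ^ 3 ≤ τ)
    (h2dc : 2 * δ * c = t * b - t ^ 2) (hb1 : 2 * t - δ < b) (hb2 : b ≤ 2 * t + δ) :
    |c * τ - t ^ 2 / 2| ≤ T ^ 2 * δ := by
  have hrange1 : t * b - 2 * t ^ 2 ≤ t * δ := by nlinarith only [hb2, ht]
  have hrange2 : -(t * δ) ≤ t * b - 2 * t ^ 2 := by nlinarith only [hb1, ht]
  have hkey1 : 2 * δ * (c * τ - t ^ 2 / 2) = (t * b - 2 * t ^ 2) * τ + t ^ 2 * (τ - δ) := by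
    linear_combination τ * h2dc
  have h2δ : (0:ℝ) < 2 * δ := by linarith
  have e1u : (t * b - 2 * t ^ 2) * τ ≤ t * δ * τ := mul_le_mul_of_nonneg_right hrange1 hτ0.le
  have e1l : -(t * δ) * τ ≤ (t * b - 2 * t ^ 2) * τ := mul_le_mul_of_nonneg_right hrange2 hτ0.le
  have e2u : t ^ 2 * (τ - δ) ≤ 0 := mul_nonpos_of_nonneg_of_nonpos (sq_nonneg t) (by linarith)
  have e2l : -(t ^ 2 * δ ^ 3) ≤ t ^ 2 * (τ - δ) := by
    nlinarith only [sq_nonneg t, hτl, hτu]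
  have e3 : t * δ * τ ≤ T * δ * δ := by
    have h1 : δ * τ ≤ δ * δ := mul_le_mul_of_nonneg_left hτu hδ.le
    calc t * δ * τ = t * (δ * τ) := by ring
      _ ≤ T * (δ * δ) := mul_le_mul htT h1 (by positivity) (by linarith)
      _ = T * δ * δ := by ring
  have e4 : t ^ 2 * δ ^ 3 ≤ T ^ 2 * δ ^ 2 := by
    have ht2 : t ^ 2 ≤ T ^ 2 := by nlinarith only [ht, htT]
    have hd3 : δ ^ 3 ≤ δ ^ 2 := by nlinarith only [hδ, hδ1]
    calc t ^ 2 * δ ^ 3 ≤ T ^ 2 * δ ^ 3 := mul_le_mul_of_nonneg_right ht2 (by positivity)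
      _ ≤ T ^ 2 * δ ^ 2 := mul_le_mul_of_nonneg_left hd3 (by positivity)
  have e5 : T * δ * δ ≤ T ^ 2 * δ ^ 2 := by
    nlinarith only [mul_nonneg (by nlinarith only [hT2] : (0:ℝ) ≤ T ^ 2 - T)
      (mul_nonneg hδ.le hδ.le)]
  rw [abs_le]
  constructor
  · have h : 2 * δ * (-(T ^ 2 * δ)) ≤ 2 * δ * (c * τ - t ^ 2 / 2) := by
      rw [hkey1]; nlinarith only [e1l, e2l, e3, e4, e5, hδ, hT2]
    exact (mul_le_mul_iff_right₀ h2δ).mp h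
  · have h : 2 * δ * (c * τ - t ^ 2 / 2) ≤ 2 * δ * (T ^ 2 * δ) := by
      rw [hkey1]; nlinarith only [e1u, e2u, e3, e5, hδ, hT2]
    exact (mul_le_mul_iff_right₀ h2δ).mp h

private lemma heat_bnd_inner {δ u : ℝ} (hδ : 0 < δ) (hδ1 : δ < 1) (hu1 : -δ < u) (hu2 : u ≤ δ) :
    |Real.exp u * (Real.exp (2 * δ) - 1) - 2 * δ| ≤ 6 * Real.exp 3 * δ ^ 2 := by
  have hE2gt : 1 + 2 * δ ≤ Real.exp (2 * δ) := by linarith [Real.add_one_le_exp (2 * δ)]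
  have hE2ub : Real.exp (2 * δ) ≤ Real.exp 2 := Real.exp_le_exp.mpr (by linarith)
  have he2 : (1:ℝ) ≤ Real.exp 2 := by linarith [Real.add_one_le_exp (2:ℝ)]
  have hee : Real.exp 1 * Real.exp 2 = Real.exp 3 := by rw [← Real.exp_add]; norm_num
  have he1 : (2:ℝ) ≤ Real.exp 1 := by linarith [Real.add_one_le_exp (1:ℝ)]
  have he3 : (1:ℝ) ≤ Real.exp 3 := by linarith [Real.add_one_le_exp (3:ℝ)]
  have hE2m1ub : Real.exp (2 * δ) - 1 ≤ 2 * δ * Real.exp 2 := by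
    have h := heat_exp_sub_one_le (by linarith : (0:ℝ) ≤ 2 * δ)
    nlinarith only [h, hE2ub, hδ]
  have hE2quad : Real.exp (2 * δ) - 1 - 2 * δ ≤ 4 * Real.exp 2 * δ ^ 2 := by
    have h := heat_exp_sub_one_sub_le (by linarith : (0:ℝ) ≤ 2 * δ)
    nlinarith only [h, hE2ub, hδ]
  have hexpu_ub : Real.exp u - 1 ≤ Real.exp 1 * δ := by
    have h1 : Real.exp u ≤ Real.exp δ := Real.exp_le_exp.mpr hu2
    have h2 := heat_exp_sub_one_le hδ.le
    have h3 : Real.exp δ ≤ Real.exp 1 := Real.exp_le_exp.mpr hδ1.le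
    nlinarith only [h1, h2, h3, hδ]
  have hexpu_lb : 1 - Real.exp u ≤ δ := by
    have h1 : Real.exp (-δ) ≤ Real.exp u := Real.exp_le_exp.mpr hu1.le
    have h2 := Real.add_one_le_exp (-δ)
    linarith
  have hsplit2 : Real.exp u * (Real.exp (2 * δ) - 1) - 2 * δ
      = (Real.exp u - 1) * (Real.exp (2 * δ) - 1) + (Real.exp (2 * δ) - 1 - 2 * δ) := by ring
  rw [hsplit2, abs_le]
  have hE2m1nn : (0:ℝ) ≤ Real.exp (2 * δ) - 1 := by linarith
  have hprod : (Real.exp 1 * δ) * (2 * δ * Real.exp 2) = 2 * Real.exp 3 * δ ^ 2 := by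
    rw [← hee]; ring
  have hq1 : (Real.exp u - 1) * (Real.exp (2 * δ) - 1)
      ≤ (Real.exp 1 * δ) * (2 * δ * Real.exp 2) := by
    rcases le_or_gt (Real.exp u) 1 with h | h
    · have h0 : (Real.exp u - 1) * (Real.exp (2 * δ) - 1) ≤ 0 :=
        mul_nonpos_of_nonpos_of_nonneg (by linarith) hE2m1nn
      nlinarith only [h0, hprod, mul_nonneg (Real.exp_pos 3).le (sq_nonneg δ)]
    · exact mul_le_mul hexpu_ub hE2m1ub hE2m1nn (by positivity)
  have hq2 : -((Real.exp 1 * δ) * (2 * δ * Real.exp 2))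
      ≤ (Real.exp u - 1) * (Real.exp (2 * δ) - 1) := by
    have ha : -δ ≤ Real.exp u - 1 := by linarith
    have hb' : (-δ) * (Real.exp (2 * δ) - 1) ≤ (Real.exp u - 1) * (Real.exp (2 * δ) - 1) :=
      mul_le_mul_of_nonneg_right ha hE2m1nn
    have hc' : (-δ) * (2 * δ * Real.exp 2) ≤ (-δ) * (Real.exp (2 * δ) - 1) :=
      mul_le_mul_of_nonpos_left hE2m1ub (by linarith)
    have hd' : -((Real.exp 1 * δ) * (2 * δ * Real.exp 2)) ≤ (-δ) * (2 * δ * Real.exp 2) := by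
      nlinarith only [he1, hδ, mul_nonneg (mul_nonneg hδ.le hδ.le) (Real.exp_pos 2).le,
        mul_nonneg (by linarith : (0:ℝ) ≤ Real.exp 1 - 1)
          (mul_nonneg (mul_nonneg hδ.le hδ.le) (Real.exp_pos 2).le)]
    linarith
  constructor
  · nlinarith only [hq2, hE2gt, hprod, hδ, mul_nonneg (Real.exp_pos 3).le (sq_nonneg δ)]
  · have he23 : Real.exp 2 ≤ Real.exp 3 := Real.exp_le_exp.mpr (by norm_num)
    nlinarith only [hq1, hE2quad, hprod, mul_nonneg (by linarith : (0:ℝ) ≤ Real.exp 3 - Real.exp 2)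
      (sq_nonneg δ)]

private lemma heat_bnd_coef {T : ℝ} (hT2 : 2 ≤ T) :
    6 * Real.exp 3 * T + Real.exp 1 + 2 * Real.exp 2 * (T + 1) ≤ 12 * Real.exp 3 * (T + 1) := by
  have he13 : Real.exp 1 ≤ Real.exp 3 := Real.exp_le_exp.mpr (by norm_num)
  have he23 : Real.exp 2 ≤ Real.exp 3 := Real.exp_le_exp.mpr (by norm_num)
  have he3 : (1:ℝ) ≤ Real.exp 3 := by linarith [Real.add_one_le_exp (3:ℝ)]
  nlinarith only [mul_nonneg (by linarith : (0:ℝ) ≤ Real.exp 3 - Real.exp 2)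
    (by linarith : (0:ℝ) ≤ T + 1), he13, he3, hT2]

set_option maxHeartbeats 2000000 in
private lemma heat_t_bound (θ : ℝ) (hθ : 0 < θ) (δ σ2 s M b : ℝ) (hδ : 0 < δ) (hδ1 : δ < 1)
    (N : ℕ) (hN0 : 0 < N)
    (hexpb : θ ^ 2 * Real.exp b = σ2)
    (hbl : (2 * (N:ℝ) - 1) * δ < b)
    (hs' : s = ∑ k ∈ Finset.range N, (σ2 - θ ^ 2 * Real.exp ((2 * (k:ℝ) + 1) * δ)))
    (hact : ∀ k : ℕ, k < N → (2 * (k:ℝ) + 1) * δ < b)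
    (hM : δ * s ≤ M) :
    0 ≤ s ∧ (N:ℝ) * δ ≤ max 2 (Real.log (max M 1 / θ ^ 2)) := by
  have hθ2 : (0:ℝ) < θ ^ 2 := by positivity
  set t : ℝ := (N:ℝ) * δ with htdef
  set T : ℝ := max 2 (Real.log (max M 1 / θ ^ 2)) with hTdef
  have htpos : 0 < t := by positivity
  have hT2 : (2:ℝ) ≤ T := le_max_left _ _
  have htermnn : ∀ k ∈ Finset.range N, 0 ≤ σ2 - θ ^ 2 * Real.exp ((2 * (k:ℝ) + 1) * δ) := by
    intro k hk
    have h1 := hact k (Finset.mem_range.mp hk)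
    have h2 : Real.exp ((2 * (k:ℝ) + 1) * δ) ≤ Real.exp b := (Real.exp_le_exp.mpr h1.le)
    nlinarith
  have hsnn : 0 ≤ s := hs' ▸ Finset.sum_nonneg htermnn
  refine ⟨hsnn, ?_⟩
  set m : ℕ := (N + 1) / 2 with hmdef
  have hm1 : m ≤ N := by omega
  have hm2 : N ≤ 2 * m := by omega
  have hterm_lb : ∀ k ∈ Finset.range m,
      θ ^ 2 * (Real.exp (2 * t - δ) - Real.exp t)
        ≤ σ2 - θ ^ 2 * Real.exp ((2 * (k:ℝ) + 1) * δ) := by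
    intro k hk
    have hk' : 2 * k + 1 ≤ N := by have := Finset.mem_range.mp hk; omega
    have hk'' : (2 * (k:ℝ) + 1) ≤ (N:ℝ) := by exact_mod_cast hk'
    have h1 : (2 * (k:ℝ) + 1) * δ ≤ t := by rw [htdef]; nlinarith
    have h2 : Real.exp ((2 * (k:ℝ) + 1) * δ) ≤ Real.exp t := Real.exp_le_exp.mpr h1
    have h3 : Real.exp (2 * t - δ) ≤ Real.exp b := by
      apply Real.exp_le_exp.mpr; rw [htdef] at *; nlinarith
    nlinarith
  have hslb : (m:ℝ) * (θ ^ 2 * (Real.exp (2 * t - δ) - Real.exp t)) ≤ s := by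
    rw [hs']
    calc (m:ℝ) * (θ ^ 2 * (Real.exp (2 * t - δ) - Real.exp t))
        ≤ ∑ k ∈ Finset.range m, (σ2 - θ ^ 2 * Real.exp ((2 * (k:ℝ) + 1) * δ)) := by
          have := Finset.card_nsmul_le_sum (Finset.range m) _ _ hterm_lb
          simpa [nsmul_eq_mul] using this
      _ ≤ ∑ k ∈ Finset.range N, (σ2 - θ ^ 2 * Real.exp ((2 * (k:ℝ) + 1) * δ)) :=
          Finset.sum_le_sum_of_subset_of_nonneg (Finset.range_subset_range.mpr hm1)
            (fun k hk _ => htermnn k hk)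
  by_contra hcon
  push_neg at hcon
  have ht2 : 2 < t := lt_of_le_of_lt hT2 hcon
  have hMnn : 0 ≤ M := le_trans (by positivity) hM
  have hmax1 : (1:ℝ) ≤ max M 1 := le_max_right _ _
  have h1 : Real.exp t ≤ Real.exp (2 * t - δ) - Real.exp t := by
    have he : Real.exp (2 * t - δ) = Real.exp t * Real.exp (t - δ) := by
      rw [← Real.exp_add]; ring_nf
    have h2 : (2:ℝ) ≤ Real.exp (t - δ) := by
      have ht1 : (1:ℝ) ≤ t - δ := by linarith
      calc (2:ℝ) ≤ Real.exp 1 := by linarith [Real.add_one_le_exp (1:ℝ)]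
        _ ≤ Real.exp (t - δ) := Real.exp_le_exp.mpr ht1
    nlinarith [Real.exp_pos t]
  have hδm : (1:ℝ) ≤ δ * m := by
    have hNm : (N:ℝ) ≤ 2 * (m:ℝ) := by exact_mod_cast hm2
    nlinarith
  have key : θ ^ 2 * Real.exp t ≤ δ * s := by
    calc θ ^ 2 * Real.exp t = 1 * (θ ^ 2 * Real.exp t) := by ring
      _ ≤ (δ * m) * (θ ^ 2 * Real.exp t) :=
          mul_le_mul_of_nonneg_right hδm (by positivity)
      _ ≤ (δ * m) * (θ ^ 2 * (Real.exp (2 * t - δ) - Real.exp t)) := by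
          refine mul_le_mul_of_nonneg_left ?_ (by positivity)
          nlinarith
      _ = δ * ((m:ℝ) * (θ ^ 2 * (Real.exp (2 * t - δ) - Real.exp t))) := by ring
      _ ≤ δ * s := mul_le_mul_of_nonneg_left hslb hδ.le
  have hTexp : max M 1 / θ ^ 2 ≤ Real.exp T := by
    calc max M 1 / θ ^ 2 = Real.exp (Real.log (max M 1 / θ ^ 2)) := by
          rw [Real.exp_log (by positivity)]
      _ ≤ Real.exp T := Real.exp_le_exp.mpr (le_max_right _ _)
  have hexpt : Real.exp T < Real.exp t := Real.exp_lt_exp.mpr hcon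
  have hfin : Real.exp t ≤ max M 1 / θ ^ 2 := by
    rw [le_div_iff₀ hθ2]
    calc Real.exp t * θ ^ 2 = θ ^ 2 * Real.exp t := by ring
      _ ≤ δ * s := key
      _ ≤ M := hM
      _ ≤ max M 1 := le_max_left _ _
  nlinarith [hTexp, hexpt, hfin, hθ2]

set_option maxHeartbeats 2000000 in
private lemma heat_main_est (θ : ℝ) (hθ : 0 < θ) (δ σ2 s c b T : ℝ) (hδ : 0 < δ) (hδ1 : δ < 1)
    (hσ2 : 0 < σ2)
    (w₀ : ℝ → ℝ)
    (hl : ∀ x : ℝ, 0 ≤ x → w₀ ((2 * x - 1) * Real.exp (2 * x) + 1) = x)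
    (hr : ∀ y : ℝ, 0 ≤ y → 0 ≤ w₀ y ∧ (2 * w₀ y - 1) * Real.exp (2 * w₀ y) + 1 = y)
    (N : ℕ) (hN0 : 0 < N)
    (hexpb : θ ^ 2 * Real.exp b = σ2)
    (hbl : (2 * (N:ℝ) - 1) * δ < b)
    (hbu : b ≤ (2 * (N:ℝ) + 1) * δ)
    (hsval : s = (N:ℝ) * σ2
      - θ ^ 2 * (Real.exp δ * ((Real.exp (2 * (N:ℝ) * δ) - 1) / (Real.exp (2 * δ) - 1))))
    (hcval : c = (1/2) * ((N:ℝ) * b - (N:ℝ) ^ 2 * δ))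
    (hsnn : 0 ≤ s)
    (hT2 : (2:ℝ) ≤ T)
    (htT : (N:ℝ) * δ ≤ T) :
    |c / (Real.cosh δ / Real.sinh δ) -
      (1/2) * (w₀ (s / ((Real.cosh δ / Real.sinh δ / 2) * θ ^ 2))) ^ 2|
      ≤ (T ^ 2 + 3 * Real.exp 3 * (T + 1) * Real.exp (2 * T)) * δ := by
  have hθ2 : (0:ℝ) < θ ^ 2 := by positivity
  set t : ℝ := (N:ℝ) * δ with htdef
  have htpos : 0 < t := by positivity
  have hch : 0 < Real.cosh δ := Real.cosh_pos δ
  have hsh : 0 < Real.sinh δ := Real.sinh_pos_iff.mpr hδ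
  set τ : ℝ := Real.sinh δ / Real.cosh δ with hτdef
  have hτpos : 0 < τ := div_pos hsh hch
  have hτub : τ ≤ δ := by
    rw [hτdef, div_le_iff₀ hch]; exact heat_sinh_le_mul_cosh hδ.le
  have hτlb : δ - δ ^ 3 ≤ τ := by
    rw [hτdef, le_div_iff₀ hch]; exact heat_mul_cosh_le_sinh hδ.le hδ1.le
  set E1 : ℝ := Real.exp δ with hE1def
  set E2 : ℝ := Real.exp (2 * δ) with hE2def
  have hE1pos : 0 < E1 := Real.exp_pos _
  have hE2pos : 0 < E2 := Real.exp_pos _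
  have hE2sq : E2 = E1 * E1 := by rw [hE2def, hE1def, ← Real.exp_add]; ring_nf
  have hE2gt : 1 + 2 * δ ≤ E2 := by
    have := Real.add_one_le_exp (2 * δ); rw [hE2def]; linarith
  have hτE : τ = (E2 - 1) / (E2 + 1) := by
    rw [hτdef, Real.sinh_eq, Real.cosh_eq, Real.exp_neg, hE2sq, ← hE1def]
    have h9 : E1 + E1⁻¹ ≠ 0 := by positivity
    field_simp
  have hee : Real.exp 1 * Real.exp 2 = Real.exp 3 := by rw [← Real.exp_add]; norm_num
  have he1 : (2:ℝ) ≤ Real.exp 1 := by linarith [Real.add_one_le_exp (1:ℝ)]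
  have hE1ub : E1 ≤ Real.exp 1 := Real.exp_le_exp.mpr hδ1.le
  have hexp2t : Real.exp (2 * t) ≤ Real.exp (2 * T) := Real.exp_le_exp.mpr (by linarith)
  have hexp2t1 : (1:ℝ) ≤ Real.exp (2 * t) := by
    rw [show (1:ℝ) = Real.exp 0 from (Real.exp_zero).symm]
    exact Real.exp_le_exp.mpr (by positivity)
  have hshne : Real.sinh δ ≠ 0 := hsh.ne'
  have hchne : Real.cosh δ ≠ 0 := hch.ne'
  have hexpr1 : c / (Real.cosh δ / Real.sinh δ) = c * τ := by
    rw [hτdef]; field_simp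
  set A : ℝ := 2 * s * τ / θ ^ 2 with hAdef
  have hA : s / ((Real.cosh δ / Real.sinh δ / 2) * θ ^ 2) = A := by
    rw [hAdef, hτdef]; field_simp
  have hAnn : 0 ≤ A := by positivity
  set gx : ℝ := (2 * t - 1) * Real.exp (2 * t) + 1 with hgxdef
  have hgx0 : 0 ≤ gx := by
    have h := heat_g_lip (le_refl (0:ℝ)) htpos.le
    norm_num [Real.exp_zero] at h
    rw [hgxdef]; nlinarith only [h, sq_nonneg t]
  have hwt : w₀ gx = t := hl t htpos.le
  have hwlip : |w₀ A ^ 2 - t ^ 2| ≤ |A - gx| / 2 := by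
    have := heat_w0_sq_lip w₀ hr hAnn hgx0
    rwa [hwt] at this
  have h2dc : 2 * δ * c = t * b - t ^ 2 := by rw [hcval, htdef]; ring
  have hbrl : 2 * t - δ < b := by rw [htdef]; nlinarith only [hbl]
  have hbru : b ≤ 2 * t + δ := by rw [htdef]; nlinarith only [hbu]
  have hB1 : |c * τ - t ^ 2 / 2| ≤ T ^ 2 * δ :=
    heat_bnd_B1 hδ hδ1 htpos htT hT2 hτpos hτub hτlb h2dc hbrl hbru
  have hE2m1pos : (0:ℝ) < E2 - 1 := by linarith
  have hA2 : A = 2 * ((N:ℝ) * Real.exp b * (E2 - 1) - E1 * (Real.exp (2 * t) - 1)) / (E2 + 1) := by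
    rw [hAdef, hsval, hτE, ← hexpb, htdef]
    rw [show 2 * ((N:ℝ) * δ) = 2 * (N:ℝ) * δ by ring]
    field_simp
  set R1 : ℝ := (N:ℝ) * Real.exp b * (E2 - 1) - 2 * t * Real.exp (2 * t) with hR1def
  set R2 : ℝ := -((E1 - 1) * (Real.exp (2 * t) - 1)) with hR2def
  set R3 : ℝ := -(gx * (E2 - 1) / 2) with hR3def
  have hid : A - gx = 2 * (R1 + R2 + R3) / (E2 + 1) := by
    rw [hA2, hR1def, hR2def, hR3def, hgxdef]
    field_simp
    ring
  have habs : |A - gx| ≤ |R1| + |R2| + |R3| := by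
    rw [hid, abs_div, abs_of_pos (by linarith : (0:ℝ) < E2 + 1), abs_mul, abs_two]
    rw [div_le_iff₀ (by linarith : (0:ℝ) < E2 + 1)]
    have h1 : |R1 + R2 + R3| ≤ |R1| + |R2| + |R3| :=
      (abs_add_le _ _).trans (add_le_add_left (abs_add_le _ _) _)
    nlinarith only [h1, abs_nonneg (R1 + R2 + R3), abs_nonneg R1, abs_nonneg R2, abs_nonneg R3,
      hE2gt, hδ]
  set u : ℝ := b - 2 * t with hudef
  have hu1 : -δ < u := by rw [hudef]; linarith
  have hu2 : u ≤ δ := by rw [hudef]; linarith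
  have heb : Real.exp b = Real.exp (2 * t) * Real.exp u := by
    rw [hudef, ← Real.exp_add]; ring_nf
  have hδR1 : δ * R1 = t * Real.exp (2 * t) * (Real.exp u * (E2 - 1) - 2 * δ) := by
    rw [hR1def, heb, htdef]; ring
  have hinner : |Real.exp u * (E2 - 1) - 2 * δ| ≤ 6 * Real.exp 3 * δ ^ 2 := by
    rw [hE2def]; exact heat_bnd_inner hδ hδ1 hu1 hu2
  have hR1bd : |R1| ≤ 6 * Real.exp 3 * (T * Real.exp (2 * T)) * δ := by
    have h1 : |δ * R1| = δ * |R1| := by rw [abs_mul, abs_of_pos hδ]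
    have h2 : |δ * R1| ≤ t * Real.exp (2 * t) * (6 * Real.exp 3 * δ ^ 2) := by
      rw [hδR1, abs_mul, abs_of_pos (by positivity : (0:ℝ) < t * Real.exp (2 * t))]
      exact mul_le_mul_of_nonneg_left hinner (by positivity)
    have hte : t * Real.exp (2 * t) ≤ T * Real.exp (2 * T) := by
      nlinarith only [hexp2t, htpos, htT, Real.exp_pos (2 * t), Real.exp_pos (2 * T)]
    have h3 : δ * |R1| ≤ δ * (6 * Real.exp 3 * (T * Real.exp (2 * T)) * δ) := by
      rw [← h1]
      refine h2.trans ?_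
      calc t * Real.exp (2 * t) * (6 * Real.exp 3 * δ ^ 2)
          = (6 * Real.exp 3 * δ ^ 2) * (t * Real.exp (2 * t)) := by ring
        _ ≤ (6 * Real.exp 3 * δ ^ 2) * (T * Real.exp (2 * T)) :=
            mul_le_mul_of_nonneg_left hte (by positivity)
        _ = δ * (6 * Real.exp 3 * (T * Real.exp (2 * T)) * δ) := by ring
    exact le_of_mul_le_mul_left h3 hδ
  have hR2bd : |R2| ≤ Real.exp 1 * Real.exp (2 * T) * δ := by
    rw [hR2def, abs_neg, abs_mul]
    have h1 : |E1 - 1| ≤ Real.exp 1 * δ := by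
      rw [abs_of_nonneg (by nlinarith only [Real.add_one_le_exp δ, hδ, hE1def] : (0:ℝ) ≤ E1 - 1)]
      have h := heat_exp_sub_one_le hδ.le
      rw [← hE1def] at h
      nlinarith only [h, hE1ub, hδ]
    have h2 : |Real.exp (2 * t) - 1| ≤ Real.exp (2 * T) := by
      rw [abs_of_nonneg (by linarith)]
      linarith
    calc |E1 - 1| * |Real.exp (2 * t) - 1| ≤ (Real.exp 1 * δ) * Real.exp (2 * T) := by
          apply mul_le_mul h1 h2 (abs_nonneg _) (by positivity)
      _ = Real.exp 1 * Real.exp (2 * T) * δ := by ring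
  have hgxub : gx ≤ (2 * T + 2) * Real.exp (2 * T) := by
    rw [hgxdef]
    have h1 : (2 * t - 1) * Real.exp (2 * t) + 1 ≤ (2 * t + 1) * Real.exp (2 * t) := by
      nlinarith only [hexp2t1]
    have h2 : (2 * t + 1) * Real.exp (2 * t) ≤ (2 * T + 1) * Real.exp (2 * T) := by
      apply mul_le_mul (by linarith) hexp2t (by positivity) (by linarith)
    nlinarith only [h1, h2, Real.exp_pos (2 * T)]
  have hE2m1ub : E2 - 1 ≤ 2 * δ * Real.exp 2 := by
    have h := heat_exp_sub_one_le (by linarith : (0:ℝ) ≤ 2 * δ)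
    rw [← hE2def] at h
    have hE2ub : E2 ≤ Real.exp 2 := by
      rw [hE2def]; exact Real.exp_le_exp.mpr (by linarith)
    nlinarith only [h, hE2ub, hδ]
  have hR3bd : |R3| ≤ Real.exp 2 * ((T + 1) * Real.exp (2 * T)) * (2 * δ) := by
    rw [hR3def, abs_neg, abs_of_nonneg (by positivity)]
    have h1 : gx * (E2 - 1) ≤ ((2 * T + 2) * Real.exp (2 * T)) * (2 * δ * Real.exp 2) :=
      mul_le_mul hgxub hE2m1ub (by linarith) (by positivity)
    have h2 : Real.exp 2 * ((T + 1) * Real.exp (2 * T)) * (2 * δ)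
        = ((2 * T + 2) * Real.exp (2 * T)) * (2 * δ * Real.exp 2) / 2 := by ring
    rw [h2]
    exact div_le_div_of_nonneg_right h1 (by norm_num) |>.trans_eq rfl
  have hAgt : |A - gx| ≤ (6 * Real.exp 3 * T + Real.exp 1 + 2 * Real.exp 2 * (T + 1))
      * Real.exp (2 * T) * δ := by
    calc |A - gx| ≤ |R1| + |R2| + |R3| := habs
      _ ≤ 6 * Real.exp 3 * (T * Real.exp (2 * T)) * δ + Real.exp 1 * Real.exp (2 * T) * δ
          + Real.exp 2 * ((T + 1) * Real.exp (2 * T)) * (2 * δ) := by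
          linarith only [hR1bd, hR2bd, hR3bd]
      _ = (6 * Real.exp 3 * T + Real.exp 1 + 2 * Real.exp 2 * (T + 1))
          * Real.exp (2 * T) * δ := by ring
  have hAgt2 : |A - gx| ≤ 12 * Real.exp 3 * (T + 1) * Real.exp (2 * T) * δ := by
    refine hAgt.trans ?_
    have h1 := heat_bnd_coef hT2
    have h2 : (6 * Real.exp 3 * T + Real.exp 1 + 2 * Real.exp 2 * (T + 1)) * Real.exp (2 * T)
        ≤ 12 * Real.exp 3 * (T + 1) * Real.exp (2 * T) :=
      mul_le_mul_of_nonneg_right h1 (Real.exp_pos _).le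
    nlinarith only [h2, hδ]
  rw [hexpr1, hA]
  have hfin1 : |c * τ - 1/2 * w₀ A ^ 2|
      ≤ |c * τ - t ^ 2 / 2| + 1/2 * |w₀ A ^ 2 - t ^ 2| := by
    have hh : c * τ - 1/2 * w₀ A ^ 2
        = (c * τ - t ^ 2 / 2) - 1/2 * (w₀ A ^ 2 - t ^ 2) := by ring
    rw [hh]
    refine (abs_sub _ _).trans ?_
    rw [abs_mul, abs_of_nonneg (by norm_num : (0:ℝ) ≤ 1/2)]
  calc |c * τ - 1/2 * w₀ A ^ 2|
      ≤ |c * τ - t ^ 2 / 2| + 1/2 * |w₀ A ^ 2 - t ^ 2| := hfin1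
    _ ≤ T ^ 2 * δ + 1/2 * (|A - gx| / 2) := by
        have h0 := abs_nonneg (w₀ A ^ 2 - t ^ 2)
        linarith only [hB1, hwlip, h0]
    _ ≤ T ^ 2 * δ + 1/2 * (12 * Real.exp 3 * (T + 1) * Real.exp (2 * T) * δ / 2) := by
        linarith only [hAgt2]
    _ = (T ^ 2 + 3 * Real.exp 3 * (T + 1) * Real.exp (2 * T)) * δ := by ring

end HeatChannelAux

/-- Theorem 1 of the paper: capacity of the heat channel in terms of average input energy.
For noise parameter `θ² > 0` and water level `σ(δ)² > 0`, with water-filled input energy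
`S(δ) = Σ_k (σ(δ)² − θ² e^{(2k+1)δ})⁺` and capacity (in nats)
`C(δ) = Σ_k ((1/2)·ln(σ(δ)²/(θ² e^{(2k+1)δ})))⁺`, if `δ·S(δ)` stays bounded as `δ → 0+` then
`C(δ)/coth δ − (1/2)·[w₀(S(δ)/((coth δ/2)·θ²))]² → 0` as `δ → 0+`, where `w₀` is the inverse of
the bijection `x ↦ (2x−1)e^{2x}+1` of `[0,∞)` onto itself (here `coth δ = cosh δ / sinh δ`
plays the role of the time–frequency product `αβ`). -/
theorem heat_channel_capacity_first_formula
    (θ : ℝ) (hθ : 0 < θ)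
    (σ : ℝ → ℝ) (hσ : ∀ δ > 0, 0 < σ δ)
    (w₀ : ℝ → ℝ)
    (hw₀_left : ∀ x : ℝ, 0 ≤ x → w₀ ((2 * x - 1) * Real.exp (2 * x) + 1) = x)
    (hw₀_right : ∀ y : ℝ, 0 ≤ y →
      0 ≤ w₀ y ∧ (2 * w₀ y - 1) * Real.exp (2 * w₀ y) + 1 = y)
    (S C : ℝ → ℝ)
    (hS : ∀ δ > 0, S δ =
      ∑' k : ℕ, max 0 (σ δ ^ 2 - θ ^ 2 * Real.exp ((2 * (k : ℝ) + 1) * δ)))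
    (hC : ∀ δ > 0, C δ =
      ∑' k : ℕ, max 0 ((1 / 2) *
        Real.log (σ δ ^ 2 / (θ ^ 2 * Real.exp ((2 * (k : ℝ) + 1) * δ)))))
    (hbound : ∃ M : ℝ, ∀ᶠ δ in nhdsWithin 0 (Set.Ioi 0), δ * S δ ≤ M) :
    Filter.Tendsto
      (fun δ : ℝ =>
        C δ / (Real.cosh δ / Real.sinh δ) -
          (1 / 2) * (w₀ (S δ / ((Real.cosh δ / Real.sinh δ / 2) * θ ^ 2))) ^ 2)
      (nhdsWithin 0 (Set.Ioi 0)) (nhds 0) := by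
  obtain ⟨M, hM⟩ := hbound
  have hθ2 : (0:ℝ) < θ ^ 2 := by positivity
  set T : ℝ := max 2 (Real.log (max M 1 / θ ^ 2)) with hTdef
  have hT2 : (2:ℝ) ≤ T := le_max_left _ _
  set K : ℝ := T ^ 2 + 3 * Real.exp 3 * (T + 1) * Real.exp (2 * T) with hKdef
  have hK0 : 0 ≤ K := by
    rw [hKdef]
    have h1 : (0:ℝ) ≤ T + 1 := by linarith
    have h2 : (0:ℝ) ≤ 3 * Real.exp 3 * (T + 1) * Real.exp (2 * T) := by positivity
    nlinarith [sq_nonneg T]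
  apply squeeze_zero_norm' (a := fun δ : ℝ => K * δ)
  · filter_upwards [hM, Ioo_mem_nhdsGT_of_mem
      (show (0:ℝ) ∈ Ico (0:ℝ) 1 by norm_num)] with δ hMδ hδm
    obtain ⟨hδ, hδ1⟩ := hδm
    rw [Real.norm_eq_abs]
    have hσδ := hσ δ hδ
    have hσ2 : 0 < σ δ ^ 2 := by positivity
    set σ2 : ℝ := σ δ ^ 2 with hσ2def
    set s : ℝ := S δ with hsdef
    set c : ℝ := C δ with hcdef
    have hs : s = ∑' k : ℕ, max 0 (σ2 - θ ^ 2 * Real.exp ((2 * (k:ℝ) + 1) * δ)) := hS δ hδ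
    have hc : c = ∑' k : ℕ, max 0 ((1/2) *
        Real.log (σ2 / (θ ^ 2 * Real.exp ((2 * (k:ℝ) + 1) * δ)))) := hC δ hδ
    set b : ℝ := Real.log σ2 - Real.log (θ ^ 2) with hbdef
    have hexpb : θ ^ 2 * Real.exp b = σ2 := by
      rw [hbdef, Real.exp_sub, Real.exp_log hσ2, Real.exp_log hθ2]
      field_simp
    have hlog : ∀ v : ℝ, Real.log (σ2 / (θ ^ 2 * Real.exp v)) = b - v := by
      intro v
      rw [Real.log_div hσ2.ne' (by positivity), Real.log_mul hθ2.ne' (Real.exp_ne_zero _),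
        Real.log_exp, hbdef]
      ring
    rcases le_or_gt b δ with hble | hbgt
    · -- no active channel : everything is 0
      have hs0 : s = 0 := by
        rw [hs]
        have hz : ∀ k : ℕ, max 0 (σ2 - θ ^ 2 * Real.exp ((2 * (k:ℝ) + 1) * δ)) = 0 := by
          intro k
          refine max_eq_left ?_
          have hk0 : (0:ℝ) ≤ (k:ℝ) := Nat.cast_nonneg k
          have h1 : b ≤ (2 * (k:ℝ) + 1) * δ := by nlinarith
          have h2 : Real.exp b ≤ Real.exp ((2 * (k:ℝ) + 1) * δ) := Real.exp_le_exp.mpr h1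
          nlinarith
        calc (∑' k : ℕ, max 0 (σ2 - θ ^ 2 * Real.exp ((2 * (k:ℝ) + 1) * δ)))
            = ∑' _ : ℕ, (0:ℝ) := tsum_congr hz
          _ = 0 := tsum_zero
      have hc0 : c = 0 := by
        rw [hc]
        have hz : ∀ k : ℕ, max 0 ((1/2) *
            Real.log (σ2 / (θ ^ 2 * Real.exp ((2 * (k:ℝ) + 1) * δ)))) = 0 := by
          intro k
          rw [hlog]
          refine max_eq_left ?_
          have hk0 : (0:ℝ) ≤ (k:ℝ) := Nat.cast_nonneg k
          have h1 : b ≤ (2 * (k:ℝ) + 1) * δ := by nlinarith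
          linarith
        calc (∑' k : ℕ, max 0 ((1/2) *
              Real.log (σ2 / (θ ^ 2 * Real.exp ((2 * (k:ℝ) + 1) * δ)))))
            = ∑' _ : ℕ, (0:ℝ) := tsum_congr hz
          _ = 0 := tsum_zero
      have hw00 : w₀ 0 = 0 := by
        have h := hw₀_left 0 le_rfl
        norm_num [Real.exp_zero] at h
        exact h
      rw [hs0, hc0]
      simp only [zero_div, hw00]
      norm_num
      positivity
    · -- at least one active channel
      have hc0pos : (0:ℝ) < (b / δ - 1) / 2 := by
        have : 1 < b / δ := (one_lt_div hδ).mpr hbgt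
        linarith
      set N : ℕ := ⌈(b / δ - 1) / 2⌉₊ with hNdef
      have hN0 : 0 < N := Nat.ceil_pos.mpr hc0pos
      have hNc : (N:ℝ) < (b / δ - 1) / 2 + 1 := Nat.ceil_lt_add_one hc0pos.le
      have hcN : (b / δ - 1) / 2 ≤ (N:ℝ) := Nat.le_ceil _
      have hbl : (2 * (N:ℝ) - 1) * δ < b := by
        have h1 : 2 * (N:ℝ) - 1 < b / δ := by linarith
        calc (2 * (N:ℝ) - 1) * δ < (b / δ) * δ := mul_lt_mul_of_pos_right h1 hδ
          _ = b := by field_simp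
      have hbu : b ≤ (2 * (N:ℝ) + 1) * δ := by
        have h2 : b / δ ≤ 2 * (N:ℝ) + 1 := by linarith
        calc b = (b / δ) * δ := by field_simp
          _ ≤ (2 * (N:ℝ) + 1) * δ := mul_le_mul_of_nonneg_right h2 hδ.le
      have hact : ∀ k : ℕ, k < N → (2 * (k:ℝ) + 1) * δ < b := by
        intro k hk
        have : (k:ℝ) < (b / δ - 1) / 2 := by exact_mod_cast Nat.lt_ceil.mp hk
        have h1 : 2 * (k:ℝ) + 1 < b / δ := by linarith
        calc (2 * (k:ℝ) + 1) * δ < (b / δ) * δ := mul_lt_mul_of_pos_right h1 hδ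
          _ = b := by field_simp
      have hsupp : ∀ k : ℕ, N ≤ k → b ≤ (2 * (k:ℝ) + 1) * δ := by
        intro k hk
        have : (b / δ - 1) / 2 ≤ (k:ℝ) := le_trans hcN (by exact_mod_cast hk)
        have h1 : b / δ ≤ 2 * (k:ℝ) + 1 := by linarith
        calc b = (b / δ) * δ := by field_simp
          _ ≤ (2 * (k:ℝ) + 1) * δ := mul_le_mul_of_nonneg_right h1 hδ.le
      have hs' : s = ∑ k ∈ Finset.range N, (σ2 - θ ^ 2 * Real.exp ((2 * (k:ℝ) + 1) * δ)) := by
        rw [hs, tsum_eq_sum (s := Finset.range N) ?_]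
        · refine Finset.sum_congr rfl fun k hk => ?_
          refine max_eq_right ?_
          have h1 := hact k (Finset.mem_range.mp hk)
          have h2 : Real.exp ((2 * (k:ℝ) + 1) * δ) < Real.exp b := Real.exp_lt_exp.mpr h1
          nlinarith
        · intro k hk
          refine max_eq_left ?_
          have h1 := hsupp k (le_of_not_gt fun h => hk (Finset.mem_range.mpr h))
          have h2 : Real.exp b ≤ Real.exp ((2 * (k:ℝ) + 1) * δ) := Real.exp_le_exp.mpr h1
          nlinarith
      have hc' : c = ∑ k ∈ Finset.range N, ((1:ℝ)/2 * (b - (2 * (k:ℝ) + 1) * δ)) := by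
        rw [hc, tsum_eq_sum (s := Finset.range N) ?_]
        · refine Finset.sum_congr rfl fun k hk => ?_
          rw [hlog]
          refine max_eq_right ?_
          have h1 := hact k (Finset.mem_range.mp hk)
          linarith
        · intro k hk
          rw [hlog]
          refine max_eq_left ?_
          have h1 := hsupp k (le_of_not_gt fun h => hk (Finset.mem_range.mpr h))
          linarith
      have hE2gt : (1:ℝ) + 2 * δ ≤ Real.exp (2 * δ) := by
        have := Real.add_one_le_exp (2 * δ); linarith
      have hE2ne : Real.exp (2 * δ) ≠ 1 := by nlinarith
      have hgeo : ∑ k ∈ Finset.range N, Real.exp ((2 * (k:ℝ) + 1) * δ)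
          = Real.exp δ * ((Real.exp (2 * (N:ℝ) * δ) - 1) / (Real.exp (2 * δ) - 1)) := by
        have h1 : ∀ k : ℕ, Real.exp ((2 * (k:ℝ) + 1) * δ)
            = Real.exp δ * (Real.exp (2 * δ)) ^ k := by
          intro k
          rw [← Real.exp_nat_mul, ← Real.exp_add]
          ring_nf
        simp_rw [h1]
        rw [← Finset.mul_sum, geom_sum_eq hE2ne N, ← Real.exp_nat_mul]
        ring_nf
      have hsval : s = (N:ℝ) * σ2
          - θ ^ 2 * (Real.exp δ * ((Real.exp (2 * (N:ℝ) * δ) - 1) / (Real.exp (2 * δ) - 1))) := by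
        rw [hs', Finset.sum_sub_distrib, Finset.sum_const, Finset.card_range,
          ← Finset.mul_sum, hgeo]
        push_cast
        ring
      have gauss : ∀ n : ℕ, ∑ k ∈ Finset.range n, ((2:ℝ) * k + 1) = (n:ℝ) ^ 2 := by
        intro n
        induction n with
        | zero => simp
        | succ m ih => rw [Finset.sum_range_succ, ih]; push_cast; ring
      have hcval : c = (1/2) * ((N:ℝ) * b - (N:ℝ) ^ 2 * δ) := by
        rw [hc']
        have h2 : ∀ k : ℕ, (1:ℝ)/2 * (b - (2 * (k:ℝ) + 1) * δ)
            = (1/2) * b - (δ/2) * ((2:ℝ) * k + 1) := by intro k; ring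
        simp_rw [h2]
        rw [Finset.sum_sub_distrib, Finset.sum_const, Finset.card_range,
          ← Finset.mul_sum, gauss]
        ring
      obtain ⟨hsnn, htT⟩ := heat_t_bound θ hθ δ σ2 s M b hδ hδ1 N hN0 hexpb hbl hs' hact hMδ
      rw [hKdef]
      exact heat_main_est θ hθ δ σ2 s c b T hδ hδ1 hσ2 w₀ hw₀_left hw₀_right N hN0 hexpb hbl hbu
        hsval hcval hsnn hT2 htT
  · have h1 : Filter.Tendsto (fun δ : ℝ => K * δ) (nhds 0) (nhds (K * 0)) :=
      ((continuous_const (y := K)).mul continuous_id).tendsto 0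
    rw [mul_zero] at h1
    exact h1.mono_left nhdsWithin_le_nhds
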